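/- Let q ≥ 3 be a prime power with q odd. Color a vertex [[α^i,0],[α^j a, α^j]] of H(q) blue if i+j is even and red if i+j is odd. Then for any a ≠ b in F_q, every edge of H(q) between V_a and V_b joins two vertices of the same color; moreover, if q ≡ 1 (mod 4), all edges between V_a and V_b have the same color. -/

import Mathlib

open Matrix Finset

/-- A graph is Hamilton connected if any two distinct vertices are joined by a Hamilton path. -/
def HamConn {V : Type*} [DecidableEq V] (G : SimpleGraph V) : Prop :=
  ∀ x y : V, x ≠ y → ∃ p : G.Walk x y, p.IsHamiltonian

/-- A bipartite graph is Hamilton laceable: there is a proper 2-coloring such that any two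
vertices of different colors are joined by a Hamilton path. -/
def HamLaceable {V : Type*} [DecidableEq V] (G : SimpleGraph V) : Prop :=
  ∃ c : V → Bool, (∀ ⦃x y⦄, G.Adj x y → c x ≠ c y) ∧
    ∀ x y : V, c x ≠ c y → ∃ p : G.Walk x y, p.IsHamiltonian

/-- The undirected Cayley graph of a group with connection set `S` (acting on the left). -/
def cayley {G : Type*} [Group G] (S : Set G) : SimpleGraph G :=
  SimpleGraph.fromRel (fun x y => ∃ s ∈ S, y = s * x)

/-- The set of row operations specified by a transition graph `E` on `[n]` together with
row multiplications/divisions by `α`: elementary matrices `A_{ij}`, `A_{ij}⁻¹` for edges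
`(i,j)` of `E`, and `M_i`, `M_i⁻¹` for all `i`. -/
def ops (n : ℕ) (F : Type*) [Field F] (E : Fin n → Fin n → Prop) (α : F) :
    Set (Matrix.GeneralLinearGroup (Fin n) F) :=
  {A | (∃ i j, E i j ∧ ((A : Matrix (Fin n) (Fin n) F) = 1 + Matrix.single j i 1 ∨
        (A : Matrix (Fin n) (Fin n) F) = 1 + Matrix.single j i (-1))) ∨
      (∃ i, (A : Matrix (Fin n) (Fin n) F) = 1 + Matrix.single i i (α - 1) ∨
        (A : Matrix (Fin n) (Fin n) F) = 1 + Matrix.single i i (α⁻¹ - 1))}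

/-- Bypass transition graphs: a single vertex, or obtained from a bypass transition graph
on `[n-1]` by adding the vertex `n` with an in-edge from some `i ∈ [n-1]` and an out-edge
to some `j ∈ [n-1]`. -/
inductive IsBypass : (n : ℕ) → (Fin n → Fin n → Prop) → Prop
  | single (E : Fin 1 → Fin 1 → Prop) : IsBypass 1 E
  | step (n : ℕ) (E : Fin (n + 1) → Fin (n + 1) → Prop)
      (hin : ∃ i : Fin n, E i.castSucc (Fin.last n))
      (hout : ∃ j : Fin n, E (Fin.last n) j.castSucc)
      (hrec : IsBypass n (fun a b => E a.castSucc b.castSucc)) :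
      IsBypass (n + 1) E

/-- The transition graph `T' = ([2], {(1,2)})`. -/
def Tonly12 : Fin 2 → Fin 2 → Prop := fun i j => i = 0 ∧ j = 1

/-- The matrix `[[α^i, 0], [α^j·a, α^j]]`. -/
def vmat {F : Type} [Field F] (α : F) (i j : ℕ) (a : F) : Matrix (Fin 2) (Fin 2) F :=
  !![α ^ i, 0; α ^ j * a, α ^ j]


section Aux

variable {F : Type} [Field F]

lemma std10_eq (c : F) : (1 : Matrix (Fin 2) (Fin 2) F) + Matrix.single 1 0 c = !![1,0;c,1] := by
  ext i j; fin_cases i <;> fin_cases j <;> simp [Matrix.single, Matrix.one_apply]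

lemma std00_eq (c : F) : (1 : Matrix (Fin 2) (Fin 2) F) + Matrix.single 0 0 c = !![1+c,0;0,1] := by
  ext i j; fin_cases i <;> fin_cases j <;> simp [Matrix.single, Matrix.one_apply]

lemma std11_eq (c : F) : (1 : Matrix (Fin 2) (Fin 2) F) + Matrix.single 1 1 c = !![1,0;0,1+c] := by
  ext i j; fin_cases i <;> fin_cases j <;> simp [Matrix.single, Matrix.one_apply]

/-- One-directional edge structure: if `B = s * A` with `s` a generator,
`A ∈ V_a`, `B ∈ V_b` and `a ≠ b`, then the powers match and the slope condition holds. -/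
lemma edge_step (α : Fˣ) (a b : F) (hab : a ≠ b) (i j k l : ℕ)
    (A B : Matrix.GeneralLinearGroup (Fin 2) F)
    (hA : (A : Matrix (Fin 2) (Fin 2) F) = vmat (α : F) i j a)
    (hB : (B : Matrix (Fin 2) (Fin 2) F) = vmat (α : F) k l b)
    (h : ∃ s ∈ ops 2 F Tonly12 (α : F), B = s * A) :
    (α : F)^k = (α : F)^i ∧ (α : F)^l = (α : F)^j ∧
      ∃ c : F, (c = 1 ∨ c = -1) ∧ (α : F)^j * b = c * (α : F)^i + (α : F)^j * a := by
  obtain ⟨s, hs, hBs⟩ := h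
  have hmul : (B : Matrix (Fin 2) (Fin 2) F) = (s : Matrix (Fin 2) (Fin 2) F) * A := by
    rw [hBs]; rfl
  rw [hA, hB] at hmul
  have hαj : (α : F)^j ≠ 0 := pow_ne_zero _ (Units.ne_zero α)
  have hαl : (α : F)^l ≠ 0 := pow_ne_zero _ (Units.ne_zero α)
  rcases hs with ⟨i', j', ⟨hi', hj'⟩, hcase⟩ | ⟨i', hcase⟩
  · -- elementary matrix case
    subst hi'; subst hj'
    have key : ∃ c : F, (c = 1 ∨ c = -1) ∧
        (s : Matrix (Fin 2) (Fin 2) F) = !![1,0;c,1] := by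
      rcases hcase with h | h
      · exact ⟨1, Or.inl rfl, by rw [h, std10_eq]⟩
      · exact ⟨-1, Or.inr rfl, by rw [h, std10_eq]⟩
    obtain ⟨c, hc, hsc⟩ := key
    rw [hsc] at hmul
    unfold vmat at hmul
    rw [Matrix.mul_fin_two] at hmul
    have e00 := congrFun (congrFun hmul 0) 0
    have e10 := congrFun (congrFun hmul 1) 0
    have e11 := congrFun (congrFun hmul 1) 1
    simp at e00 e10 e11
    refine ⟨by linear_combination e00, by linear_combination e11, c, hc, ?_⟩
    linear_combination e10 - b * e11
  · -- row multiplication case: contradiction with a ≠ b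
    exfalso
    have key : ∃ d : F, ((s : Matrix (Fin 2) (Fin 2) F) = !![d,0;0,1] ∨
        (s : Matrix (Fin 2) (Fin 2) F) = !![1,0;0,d]) := by
      have hi2 : i' = 0 ∨ i' = 1 := by omega
      rcases hi2 with rfl | rfl <;> rcases hcase with h | h
      · exact ⟨(α:F), Or.inl (by rw [h, std00_eq]; norm_num)⟩
      · exact ⟨((α:F)⁻¹), Or.inl (by rw [h, std00_eq]; norm_num)⟩
      · exact ⟨(α:F), Or.inr (by rw [h, std11_eq]; norm_num)⟩
      · exact ⟨((α:F)⁻¹), Or.inr (by rw [h, std11_eq]; norm_num)⟩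
    obtain ⟨d, hsd | hsd⟩ := key <;> rw [hsd] at hmul <;> unfold vmat at hmul <;>
      rw [Matrix.mul_fin_two] at hmul
    · have e10 := congrFun (congrFun hmul 1) 0
      have e11 := congrFun (congrFun hmul 1) 1
      simp at e10 e11
      exact hab ((mul_left_cancel₀ hαj (by linear_combination e10 - b * e11)).symm)
    · have e10 := congrFun (congrFun hmul 1) 0
      have e11 := congrFun (congrFun hmul 1) 1
      simp at e10 e11
      exact hab ((mul_left_cancel₀ hαl (by linear_combination e10 - a * e11)).symm)

end Aux

/-- coloring a vertex `[[α^i,0],[α^j a, α^j]]` of `H(q)` blue iff `i+j` is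
even, every edge between `V_a` and `V_b` (`a ≠ b`) joins two vertices of the same color;
moreover if `q ≡ 1 (mod 4)` then all edges between `V_a` and `V_b` have the same color. -/
theorem vertex_coloring (q : ℕ) (hq3 : 3 ≤ q) (hodd : Odd q)
    (F : Type) [Field F] [Fintype F] [DecidableEq F] (hq : Fintype.card F = q)
    (α : Fˣ) (hα : ∀ x : Fˣ, x ∈ Subgroup.zpowers α) (a b : F) (hab : a ≠ b) :
    (∀ (i j k l : ℕ) (A B : Matrix.GeneralLinearGroup (Fin 2) F),
      (A : Matrix (Fin 2) (Fin 2) F) = vmat (α : F) i j a →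
      (B : Matrix (Fin 2) (Fin 2) F) = vmat (α : F) k l b →
      (cayley (ops 2 F Tonly12 (α : F))).Adj A B →
      (Even (i + j) ↔ Even (k + l))) ∧
    (q % 4 = 1 →
      ∀ (i j k l i' j' k' l' : ℕ) (A B A' B' : Matrix.GeneralLinearGroup (Fin 2) F),
        (A : Matrix (Fin 2) (Fin 2) F) = vmat (α : F) i j a →
        (B : Matrix (Fin 2) (Fin 2) F) = vmat (α : F) k l b →
        (cayley (ops 2 F Tonly12 (α : F))).Adj A B →
        (A' : Matrix (Fin 2) (Fin 2) F) = vmat (α : F) i' j' a →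
        (B' : Matrix (Fin 2) (Fin 2) F) = vmat (α : F) k' l' b →
        (cayley (ops 2 F Tonly12 (α : F))).Adj A' B' →
        (Even (i + j) ↔ Even (i' + j'))) := by
  -- setup order facts
  have hcard : orderOf α = q - 1 := by
    have h1 := orderOf_eq_card_of_forall_mem_zpowers hα
    rw [h1, Nat.card_eq_fintype_card, Fintype.card_units, hq]
  have h2dvd : 2 ∣ orderOf α := by
    rw [hcard]; obtain ⟨t, rfl⟩ := hodd; omega
  have parity : ∀ m n : ℕ, (α : F) ^ m = (α : F) ^ n → m % 2 = n % 2 := by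
    intro m n h
    have hu : α ^ m = α ^ n := Units.ext (by push_cast; exact h)
    exact Nat.ModEq.of_dvd h2dvd (pow_eq_pow_iff_modEq.mp hu)
  -- combined edge lemma (both directions)
  have edge : ∀ (i j k l : ℕ) (A B : Matrix.GeneralLinearGroup (Fin 2) F),
      (A : Matrix (Fin 2) (Fin 2) F) = vmat (α : F) i j a →
      (B : Matrix (Fin 2) (Fin 2) F) = vmat (α : F) k l b →
      (cayley (ops 2 F Tonly12 (α : F))).Adj A B →
      ((α : F) ^ k = (α : F) ^ i ∧ (α : F) ^ l = (α : F) ^ j ∧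
        ∃ c : F, (c = 1 ∨ c = -1) ∧ (α : F) ^ j * (b - a) = c * (α : F) ^ i) := by
    intro i j k l A B hA hB hadj
    rw [cayley, SimpleGraph.fromRel_adj] at hadj
    obtain ⟨hne, h | h⟩ := hadj
    · obtain ⟨h1, h2, c, hc, h3⟩ := edge_step α a b hab i j k l A B hA hB h
      exact ⟨h1, h2, c, hc, by linear_combination h3⟩
    · obtain ⟨h1, h2, c, hc, h3⟩ := edge_step α b a (Ne.symm hab) k l i j B A hB hA h
      refine ⟨h1.symm, h2.symm, -c, ?_, by linear_combination -h3 + (b - a) * h2 + c * h1⟩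
      rcases hc with rfl | rfl
      · exact Or.inr rfl
      · exact Or.inl (neg_neg 1)
  constructor
  · -- part 1
    intro i j k l A B hA hB hadj
    obtain ⟨h1, h2, -⟩ := edge i j k l A B hA hB hadj
    have p1 := parity k i h1
    have p2 := parity l j h2
    rw [Nat.even_iff, Nat.even_iff]
    omega
  · -- part 2
    intro hq4 i j k l i' j' k' l' A B A' B' hA hB hadj hA' hB' hadj'
    obtain ⟨-, -, c, hc, h3⟩ := edge i j k l A B hA hB hadj
    obtain ⟨-, -, c', hc', h3'⟩ := edge i' j' k' l' A' B' hA' hB' hadj'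
    -- -1 is an even power of α
    obtain ⟨s, hs0⟩ := (mem_powers_iff_mem_zpowers).mpr (hα (-1))
    have hs : α ^ s = -1 := hs0
    have hsF : (α : F) ^ s = -1 := by
      have := congrArg (Units.val) hs; push_cast at this; exact this
    have hsev : s % 2 = 0 := by
      have h2s : α ^ (s * 2) = 1 := by rw [pow_mul, hs]; norm_num
      have hdvd : orderOf α ∣ s * 2 := orderOf_dvd_of_pow_eq_one h2s
      rw [hcard] at hdvd
      obtain ⟨u, hu⟩ := hdvd
      obtain ⟨m, hm⟩ : ∃ m, q = 4 * m + 1 := ⟨q / 4, by omega⟩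
      have h4 : s * 2 = 4 * (m * u) := by
        rw [hu, show q - 1 = 4 * m by omega]; ring
      obtain ⟨k, hk⟩ : ∃ k, s * 2 = 4 * k := ⟨m * u, h4⟩
      omega
    have claim : ∀ m n : ℕ, ((α : F) ^ m = (α : F) ^ n ∨ (α : F) ^ m = -(α : F) ^ n) →
        m % 2 = n % 2 := by
      intro m n hmn
      rcases hmn with h | h
      · exact parity m n h
      · have : (α : F) ^ m = (α : F) ^ (s + n) := by rw [pow_add, hsF]; linear_combination h
        have := parity m (s + n) this
        omega
    -- cross-multiplied relation
    have hcross : c * (α : F) ^ (i + j') = c' * (α : F) ^ (i' + j) := by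
      rw [pow_add, pow_add]
      linear_combination (α : F) ^ j * h3' - (α : F) ^ j' * h3
    have hkey : (i + j') % 2 = (i' + j) % 2 := by
      rcases hc with rfl | rfl <;> rcases hc' with rfl | rfl
      · exact claim _ _ (Or.inl (by linear_combination hcross))
      · exact claim _ _ (Or.inr (by linear_combination hcross))
      · exact (claim _ _ (Or.inr (by linear_combination -hcross))).symm
      · exact claim _ _ (Or.inl (by linear_combination -hcross))
    rw [Nat.even_iff, Nat.even_iff]
    omega
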